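/- arXiv:2107.02439 — 5 statements merged into one kernel-verified Lean document; each statement's English description precedes it below -/
import Mathlib

section
/- Let f, f_0 : ℝ → ℝ be Hölder continuous with constants L and L_0 respectively and exponent β ∈ (0,1]. Let B be a finite union of disjoint intervals B_j = [x_j − h, x_j + h], j = 1,…,N. Set p(j) = ∫_{B_j} f and p_0(j) = ∫_{B_j} f_0. Then |∫_B (f − f_0)² dx − (1/(2h)) Σ_j (p(j) − p_0(j))²| ≤ 4(L + L_0)² |B| h^{2β}, where |B| = 2Nh. -/
open MeasureTheory Filter

private lemma per_interval (g : ℝ → ℝ) (K β : ℝ) (hK : 0 ≤ K) (hβ0 : 0 < β) (hβ1 : β ≤ 1)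
    (hg : ∀ a b : ℝ, |g a - g b| ≤ K * |a - b| ^ β) (hgc : Continuous g)
    (c h : ℝ) (hh : 0 < h) :
    |(∫ y in Set.Icc (c - h) (c + h), g y ^ 2) -
      (1 / (2 * h)) * (∫ y in Set.Icc (c - h) (c + h), g y) ^ 2|
      ≤ 8 * K ^ 2 * h ^ (2 * β) * h := by
  set B := Set.Icc (c - h) (c + h) with hB
  have hvol : (volume B).toReal = 2 * h := by
    rw [hB, Real.volume_Icc]
    rw [show c + h - (c - h) = 2 * h by ring, ENNReal.toReal_ofReal (by linarith)]
  set q := ∫ y in B, g y with hq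
  set m := q / (2 * h) with hm
  have hgint : IntegrableOn g B := hgc.integrableOn_Icc
  -- pointwise bound
  have hpt : ∀ y ∈ B, |g y - m| ≤ 2 * K * h ^ β := by
    intro y hy
    have hconst : ∫ _z in B, g y = 2 * h * g y := by
      rw [setIntegral_const, measureReal_def, hvol, smul_eq_mul]
    have hident : ∫ z in B, (g y - g z) = 2 * h * g y - q := by
      rw [integral_sub (integrableOn_const (C := g y) (ne_of_lt ?_)) hgint, hconst]
      · rw [hB, Real.volume_Icc]; exact ENNReal.ofReal_lt_top
    have habs : |∫ z in B, (g y - g z)| ≤ ∫ z in B, |g y - g z| := by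
      simpa [Real.norm_eq_abs] using
        norm_integral_le_integral_norm (μ := volume.restrict B) (fun z => g y - g z)
    have hmono : ∫ z in B, |g y - g z| ≤ ∫ _z in B, K * (2*h) ^ β := by
      apply setIntegral_mono_on
      · exact ((continuous_const.sub hgc).abs).integrableOn_Icc
      · exact integrableOn_const (by rw [hB, Real.volume_Icc]; exact ENNReal.ofReal_lt_top.ne)
      · exact measurableSet_Icc
      · intro z hz
        have hdist : |y - z| ≤ 2 * h := by
          rw [abs_le]; constructor <;> [linarith [hy.1, hy.2, hz.1, hz.2]; linarith [hy.1, hy.2, hz.1, hz.2]]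
        calc |g y - g z| ≤ K * |y - z| ^ β := hg y z
          _ ≤ K * (2*h) ^ β := by
              apply mul_le_mul_of_nonneg_left _ hK
              exact Real.rpow_le_rpow (abs_nonneg _) hdist hβ0.le
    have hconst2 : ∫ _z in B, K * (2*h) ^ β = 2 * h * (K * (2*h)^β) := by
      rw [setIntegral_const, measureReal_def, hvol, smul_eq_mul]
    have hkey : |g y - m| = (1 / (2*h)) * |∫ z in B, (g y - g z)| := by
      rw [hident]
      have e : g y - m = (1/(2*h)) * (2*h*g y - q) := by rw [hm]; field_simp
      rw [e, abs_mul, abs_of_pos (show (0:ℝ) < 1/(2*h) by positivity)]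
    rw [hkey]
    have hb1 : (1 / (2*h)) * |∫ z in B, (g y - g z)| ≤ (1/(2*h)) * (2 * h * (K * (2*h)^β)) := by
      apply mul_le_mul_of_nonneg_left _ (by positivity)
      exact habs.trans (hmono.trans_eq hconst2)
    apply hb1.trans
    rw [show (1/(2*h)) * (2 * h * (K * (2*h)^β)) = K * (2*h)^β by field_simp]
    have h2b : (2*h) ^ β = 2 ^ β * h ^ β := Real.mul_rpow (by norm_num) hh.le
    have h2le : (2:ℝ) ^ β ≤ 2 := by
      calc (2:ℝ) ^ β ≤ 2 ^ (1:ℝ) := Real.rpow_le_rpow_of_exponent_le one_le_two hβ1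
        _ = 2 := Real.rpow_one 2
    rw [h2b]
    have : K * (2 ^ β * h ^ β) ≤ K * (2 * h ^ β) := by
      apply mul_le_mul_of_nonneg_left _ hK
      exact mul_le_mul_of_nonneg_right h2le (Real.rpow_nonneg hh.le β)
    linarith
  -- identity
  have hBfin : volume B < ⊤ := by rw [hB, Real.volume_Icc]; exact ENNReal.ofReal_lt_top
  have hg2int : IntegrableOn (fun z => g z ^ 2) B := (hgc.pow 2).integrableOn_Icc
  have hident2 : ∫ z in B, (g z - m) ^ 2 = (∫ z in B, g z ^ 2) - (1/(2*h)) * q ^ 2 := by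
    have e1 : ∀ z : ℝ, (g z - m)^2 = g z ^ 2 - 2*m*g z + m^2 := by intro z; ring
    simp_rw [e1]
    have i1 : Integrable (fun z => 2*m*g z) (volume.restrict B) := hgint.const_mul (2*m)
    have i2 : Integrable (fun z => g z ^ 2 - 2*m*g z) (volume.restrict B) := hg2int.sub i1
    rw [integral_add i2 (integrableOn_const hBfin.ne),
        integral_sub hg2int i1]
    have e2 : ∫ z in B, 2*m*g z = 2*m*q := by rw [integral_const_mul]
    have e3 : ∫ _z in B, m^2 = 2*h*m^2 := by rw [setIntegral_const, measureReal_def, hvol, smul_eq_mul]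
    rw [e2, e3, hm]
    field_simp
    ring
  have hnn : 0 ≤ ∫ z in B, (g z - m) ^ 2 :=
    setIntegral_nonneg measurableSet_Icc (fun z _ => sq_nonneg _)
  have hub : ∫ z in B, (g z - m) ^ 2 ≤ 8 * K ^ 2 * h ^ (2*β) * h := by
    have : ∫ z in B, (g z - m) ^ 2 ≤ ∫ _z in B, (2*K*h^β)^2 := by
      apply setIntegral_mono_on ((hgc.sub continuous_const).pow 2).integrableOn_Icc
        (integrableOn_const hBfin.ne) measurableSet_Icc
      intro z hz
      have := hpt z hz
      have h1 : |g z - m| ^ 2 ≤ (2*K*h^β)^2 := by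
        apply pow_le_pow_left₀ (abs_nonneg _) this
      calc (g z - m)^2 = |g z - m|^2 := (sq_abs _).symm
        _ ≤ (2*K*h^β)^2 := h1
    apply this.trans
    rw [setIntegral_const, measureReal_def, hvol, smul_eq_mul]
    have hr : (h ^ β) ^ 2 = h ^ (2*β) := by
      rw [← Real.rpow_natCast (h ^ β) 2, ← Real.rpow_mul hh.le]
      norm_num [mul_comm]
    rw [← hr]
    exact le_of_eq (by ring)
  rw [← hident2, abs_of_nonneg hnn]
  exact hub


private lemma continuous_of_holder (f : ℝ → ℝ) (L β : ℝ) (hβ0 : 0 < β)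
    (hf : ∀ a b : ℝ, |f a - f b| ≤ L * |a - b| ^ β) : Continuous f := by
  rw [continuous_iff_continuousAt]
  intro a
  rw [ContinuousAt, tendsto_iff_norm_sub_tendsto_zero]
  have h1 : Tendsto (fun b : ℝ => |b - a|) (nhds a) (nhds 0) := by
    have := ((continuous_id.sub (continuous_const (y := a))).abs).tendsto a
    simpa using this
  have h2 : ContinuousAt (fun t : ℝ => t ^ β) 0 :=
    Real.continuousAt_rpow_const 0 β (Or.inr hβ0.le)
  have h3 : Tendsto (fun b : ℝ => |b - a| ^ β) (nhds a) (nhds 0) := by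
    have := h2.tendsto.comp h1
    simpa [Function.comp_def, Real.zero_rpow hβ0.ne'] using this
  have hb : Tendsto (fun b : ℝ => L * |b - a| ^ β) (nhds a) (nhds 0) := by
    simpa using h3.const_mul L
  apply squeeze_zero (fun b => norm_nonneg _) (fun b => ?_) hb
  simpa [Real.norm_eq_abs] using hf b a

theorem l2_discretization_bound (N : ℕ) (f f0 : ℝ → ℝ) (L L0 β : ℝ)
    (hβ0 : 0 < β) (hβ1 : β ≤ 1)
    (hf : ∀ a b : ℝ, |f a - f b| ≤ L * |a - b| ^ β)
    (hf0 : ∀ a b : ℝ, |f0 a - f0 b| ≤ L0 * |a - b| ^ β)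
    (h : ℝ) (hh : 0 < h) (x : Fin N → ℝ)
    (hdisj : ∀ i j, i ≠ j →
      Disjoint (Set.Icc (x i - h) (x i + h)) (Set.Icc (x j - h) (x j + h))) :
    |(∫ y in ⋃ j, Set.Icc (x j - h) (x j + h), (f y - f0 y) ^ 2) -
        (1 / (2 * h)) * ∑ j : Fin N,
          ((∫ y in Set.Icc (x j - h) (x j + h), f y) -
           (∫ y in Set.Icc (x j - h) (x j + h), f0 y)) ^ 2|
      ≤ 4 * (L + L0) ^ 2 * (2 * N * h) * h ^ (2 * β) := by
  set g : ℝ → ℝ := fun y => f y - f0 y with hgdef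
  set K := L + L0 with hKdef
  have hL : 0 ≤ L := by
    have h1 := hf 0 1
    rw [show |(0:ℝ) - 1| = 1 by norm_num, Real.one_rpow, mul_one] at h1
    exact le_trans (abs_nonneg _) h1
  have hL0 : 0 ≤ L0 := by
    have h1 := hf0 0 1
    rw [show |(0:ℝ) - 1| = 1 by norm_num, Real.one_rpow, mul_one] at h1
    exact le_trans (abs_nonneg _) h1
  have hK : 0 ≤ K := by rw [hKdef]; linarith
  have hgh : ∀ a b : ℝ, |g a - g b| ≤ K * |a - b| ^ β := by
    intro a b
    calc |g a - g b| = |(f a - f b) - (f0 a - f0 b)| := by rw [hgdef]; ring_nf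
      _ ≤ |f a - f b| + |f0 a - f0 b| := abs_sub _ _
      _ ≤ L * |a - b| ^ β + L0 * |a - b| ^ β := add_le_add (hf a b) (hf0 a b)
      _ = K * |a - b| ^ β := by rw [hKdef]; ring
  have hfc : Continuous f := continuous_of_holder f L β hβ0 hf
  have hf0c : Continuous f0 := continuous_of_holder f0 L0 β hβ0 hf0
  have hgc : Continuous g := hfc.sub hf0c
  -- rewrite differences of integrals
  have hpq : ∀ j : Fin N,
      (∫ y in Set.Icc (x j - h) (x j + h), f y) - (∫ y in Set.Icc (x j - h) (x j + h), f0 y)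
        = ∫ y in Set.Icc (x j - h) (x j + h), g y := by
    intro j
    rw [← integral_sub hfc.integrableOn_Icc hf0c.integrableOn_Icc]
  -- integral over union
  have hg2int : ∀ j : Fin N, IntegrableOn (fun y => g y ^ 2) (Set.Icc (x j - h) (x j + h)) :=
    fun j => (hgc.pow 2).integrableOn_Icc
  have hunion : IntegrableOn (fun y => g y ^ 2) (⋃ j, Set.Icc (x j - h) (x j + h)) := by
    rw [integrableOn_finite_iUnion]
    exact hg2int
  have hsplit : (∫ y in ⋃ j, Set.Icc (x j - h) (x j + h), g y ^ 2)
      = ∑ j : Fin N, ∫ y in Set.Icc (x j - h) (x j + h), g y ^ 2 := by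
    have hpd : Pairwise (Function.onFun Disjoint fun j : Fin N => Set.Icc (x j - h) (x j + h)) :=
      fun i j hij => hdisj i j hij
    rw [integral_iUnion (fun j => measurableSet_Icc) hpd hunion, tsum_fintype]
  have key : ∀ j : Fin N,
      |(∫ y in Set.Icc (x j - h) (x j + h), g y ^ 2) -
        (1 / (2 * h)) * (∫ y in Set.Icc (x j - h) (x j + h), g y) ^ 2|
        ≤ 8 * K ^ 2 * h ^ (2 * β) * h :=
    fun j => per_interval g K β hK hβ0 hβ1 hgh hgc (x j) h hh
  calc |(∫ y in ⋃ j, Set.Icc (x j - h) (x j + h), (f y - f0 y) ^ 2) -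
        (1 / (2 * h)) * ∑ j : Fin N,
          ((∫ y in Set.Icc (x j - h) (x j + h), f y) -
           (∫ y in Set.Icc (x j - h) (x j + h), f0 y)) ^ 2|
      = |∑ j : Fin N, ((∫ y in Set.Icc (x j - h) (x j + h), g y ^ 2) -
          (1 / (2 * h)) * (∫ y in Set.Icc (x j - h) (x j + h), g y) ^ 2)| := by
        rw [show (∑ j : Fin N, ((∫ y in Set.Icc (x j - h) (x j + h), f y) -
             (∫ y in Set.Icc (x j - h) (x j + h), f0 y)) ^ 2)
            = ∑ j : Fin N, (∫ y in Set.Icc (x j - h) (x j + h), g y) ^ 2 from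
            Finset.sum_congr rfl (fun j _ => by rw [hpq j]),
          hsplit, Finset.mul_sum, ← Finset.sum_sub_distrib]
    _ ≤ ∑ j : Fin N, |(∫ y in Set.Icc (x j - h) (x j + h), g y ^ 2) -
          (1 / (2 * h)) * (∫ y in Set.Icc (x j - h) (x j + h), g y) ^ 2| :=
        Finset.abs_sum_le_sum_abs _ _
    _ ≤ ∑ _j : Fin N, 8 * K ^ 2 * h ^ (2 * β) * h :=
        Finset.sum_le_sum (fun j _ => key j)
    _ = N * (8 * K ^ 2 * h ^ (2 * β) * h) := by
        rw [Finset.sum_const, Finset.card_univ, Fintype.card_fin, nsmul_eq_mul]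
    _ = 4 * K ^ 2 * (2 * N * h) * h ^ (2 * β) := by ring
end

section
/- Let f, f_0 be as above and B a finite union of disjoint intervals B_j = [x_j − h, x_j + h]. Then (∫_B |f − f_0|)² ≤ 4(L + L_0)² |B|² h^{2β} + (|B|/(2h)) Σ_{j=1}^N (p(j) − p_0(j))². -/
open MeasureTheory
set_option maxHeartbeats 1000000

lemma holder_cont {f : ℝ → ℝ} {L β : ℝ} (hβ0 : 0 < β)
    (hf : ∀ a b : ℝ, |f a - f b| ≤ L * |a - b| ^ β) : Continuous f := by
  have hL : 0 ≤ L := by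
    have := hf 0 1
    simp at this
    exact le_trans (abs_nonneg _) this
  rw [Metric.continuous_iff]
  intro b ε hε
  refine ⟨(ε / (L + 1)) ^ (1/β), Real.rpow_pos_of_pos (by positivity) _, fun a hab => ?_⟩
  have h1 : |a - b| ^ β ≤ ((ε / (L + 1)) ^ (1/β)) ^ β :=
    Real.rpow_le_rpow (abs_nonneg _) hab.le hβ0.le
  have h2 : ((ε / (L + 1)) ^ (1/β) : ℝ) ^ β = ε / (L + 1) := by
    rw [← Real.rpow_mul (by positivity), one_div_mul_cancel hβ0.ne', Real.rpow_one]
  rw [h2] at h1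
  have he : ε / (L + 1) * (L + 1) = ε := div_mul_cancel₀ _ (by positivity)
  have he0 : 0 < ε / (L + 1) := by positivity
  calc dist (f a) (f b) = |f a - f b| := Real.dist_eq _ _
    _ ≤ L * |a - b| ^ β := hf a b
    _ ≤ L * (ε / (L + 1)) := mul_le_mul_of_nonneg_left h1 hL
    _ < ε := by nlinarith


lemma cs_int {s : Set ℝ} (hs : MeasurableSet s) (hμ : volume s ≠ ⊤) {u : ℝ → ℝ}
    (hu : IntegrableOn u s) (hu2 : IntegrableOn (fun y => u y ^ 2) s)
    (hnn : ∀ y, 0 ≤ u y) :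
    (∫ y in s, u y) ^ 2 ≤ (volume s).toReal * ∫ y in s, u y ^ 2 := by
  set M := (volume s).toReal with hM
  have hM0 : 0 ≤ M := ENNReal.toReal_nonneg
  set I := ∫ y in s, u y ^ 2 with hI
  have hI0 : 0 ≤ I := integral_nonneg (fun y => sq_nonneg _)
  set T := ∫ y in s, u y with hT
  have hT0 : 0 ≤ T := integral_nonneg hnn
  rcases eq_or_lt_of_le hT0 with h0 | hTpos
  · rw [← h0]; simpa using mul_nonneg hM0 hI0
  have hMpos : 0 < M := by
    have hvol : volume s ≠ 0 := by
      intro hz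
      have : T = 0 := by rw [hT, Measure.restrict_eq_zero.mpr hz, integral_zero_measure]
      linarith
    exact ENNReal.toReal_pos hvol hμ
  set c := T / M with hc
  have hc0 : 0 < c := div_pos hTpos hMpos
  have key : ∀ y, u y ≤ u y ^ 2 / (2 * c) + c / 2 := by
    intro y
    rw [div_add_div _ _ (by positivity) (by positivity : (2:ℝ) ≠ 0),
      le_div_iff₀ (by positivity)]
    nlinarith [sq_nonneg (u y - c)]
  have hint : T ≤ I / (2 * c) + c / 2 * M := by
    have h1 : T ≤ ∫ y in s, (u y ^ 2 / (2 * c) + c / 2) := by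
      refine setIntegral_mono_on hu ?_ hs (fun y _ => key y)
      exact (hu2.div_const _).add (integrableOn_const hμ)
    rw [integral_add (hu2.div_const _) (integrableOn_const hμ),
      integral_div, setIntegral_const, measureReal_def] at h1
    simpa [smul_eq_mul, mul_comm, ← hI] using h1
  have h3 : c / 2 * M = T / 2 := by
    rw [div_mul_eq_mul_div, hc, div_mul_cancel₀ _ hMpos.ne']
  have h4 : I / (2 * c) = I * M / (2 * T) := by
    rw [hc]; field_simp
  rw [h3, h4] at hint
  have h5 : I * M / (2 * T) * (2 * T) = I * M := div_mul_cancel₀ _ (by positivity)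
  nlinarith [hint, hTpos, h5]

lemma interval_bound {g : ℝ → ℝ} (hg : Continuous g) {K β h : ℝ} (hK : 0 ≤ K)
    (hβ0 : 0 < β) (hβ1 : β ≤ 1) (hh : 0 < h)
    (hgH : ∀ a b : ℝ, |g a - g b| ≤ K * |a - b| ^ β) (xj : ℝ) :
    ∫ y in Set.Icc (xj - h) (xj + h), g y ^ 2
      ≤ 2 * h * (2 * K * h ^ β) ^ 2
        + (∫ y in Set.Icc (xj - h) (xj + h), g y) ^ 2 / (2 * h) := by
  set s := Set.Icc (xj - h) (xj + h) with hs
  have hms : MeasurableSet s := measurableSet_Icc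
  have hvol : volume s = ENNReal.ofReal (2 * h) := by
    rw [hs, Real.volume_Icc]; ring_nf
  have hvolr : (volume s).toReal = 2 * h := by
    rw [hvol, ENNReal.toReal_ofReal (by positivity)]
  have hfin : volume s ≠ ⊤ := by rw [hvol]; exact ENNReal.ofReal_ne_top
  have hint_g : IntegrableOn g s := hg.integrableOn_Icc
  have hint_g2 : IntegrableOn (fun y => g y ^ 2) s := (hg.pow 2).integrableOn_Icc
  set T := ∫ y in s, g y with hT
  set a := T / (2 * h) with ha
  set c := 2 * K * h ^ β with hc
  have hc0 : 0 ≤ c := by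
    have : (0:ℝ) ≤ h ^ β := Real.rpow_nonneg hh.le β
    positivity
  have hint_gma2 : IntegrableOn (fun y => (g y - a) ^ 2) s :=
    ((hg.sub continuous_const).pow 2).integrableOn_Icc
  -- pointwise bound |g y - a| ≤ c for y ∈ s
  have hpt : ∀ y ∈ s, |g y - a| ≤ c := by
    intro y hy
    have hdiff : ∀ z ∈ s, |g y - g z| ≤ c := by
      intro z hz
      have hyz : |y - z| ≤ 2 * h := by
        rw [abs_sub_le_iff]
        constructor <;>
          · obtain ⟨h1, h2⟩ := hy; obtain ⟨h3, h4⟩ := hz; linarith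
      calc |g y - g z| ≤ K * |y - z| ^ β := hgH y z
        _ ≤ K * (2 * h) ^ β :=
            mul_le_mul_of_nonneg_left (Real.rpow_le_rpow (abs_nonneg _) hyz hβ0.le) hK
        _ ≤ c := by
            rw [hc, Real.mul_rpow (by norm_num) hh.le]
            have h2b : (2:ℝ) ^ β ≤ 2 := by
              calc (2:ℝ) ^ β ≤ (2:ℝ) ^ (1:ℝ) :=
                Real.rpow_le_rpow_of_exponent_le one_le_two hβ1
                _ = 2 := Real.rpow_one 2
            have := Real.rpow_nonneg hh.le β
            nlinarith
    have hconst : ∫ _ in s, g y = 2 * h * g y := by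
      rw [setIntegral_const, measureReal_def, hvolr, smul_eq_mul]
    have hsub : ∫ z in s, (g y - g z) = 2 * h * g y - T := by
      rw [integral_sub (integrableOn_const (C := g y) hfin) hint_g, hconst]
    have hbnd : |∫ z in s, (g y - g z)| ≤ 2 * h * c := by
      calc |∫ z in s, (g y - g z)| ≤ ∫ z in s, |g y - g z| := by
            simpa [Real.norm_eq_abs] using
              norm_integral_le_integral_norm (μ := volume.restrict s) (fun z => g y - g z)
        _ ≤ ∫ _ in s, c :=
            setIntegral_mono_on
              ((integrableOn_const hfin).sub hint_g).abs
              (integrableOn_const hfin) hms (fun z hz => hdiff z hz)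
        _ = 2 * h * c := by rw [setIntegral_const, measureReal_def, hvolr, smul_eq_mul]
    have heq : g y - a = (∫ z in s, (g y - g z)) / (2 * h) := by
      rw [hsub, ha]; field_simp
    rw [heq, abs_div, abs_of_pos (by positivity : (0:ℝ) < 2 * h),
      div_le_iff₀ (by positivity : (0:ℝ) < 2 * h)]
    calc |∫ z in s, (g y - g z)| ≤ 2 * h * c := hbnd
      _ = c * (2 * h) := by ring
  -- orthogonality decomposition
  have hTa : T = 2 * h * a := by rw [ha]; field_simp
  have horth : ∫ y in s, g y ^ 2
      = (∫ y in s, (g y - a) ^ 2) + 2 * h * a ^ 2 := by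
    have hia : IntegrableOn (fun y => 2 * a * g y) s := hint_g.const_mul _
    have hic : IntegrableOn (fun _ : ℝ => a ^ 2) s :=
      integrableOn_const hfin
    have key : ∫ y in s, (g y - a) ^ 2
        = (∫ y in s, g y ^ 2) - 2 * a * T + 2 * h * a ^ 2 := by
      have hisub : IntegrableOn (fun y => g y ^ 2 - 2 * a * g y) s := hint_g2.sub hia
      have e1 : ∀ y : ℝ, (g y - a) ^ 2 = g y ^ 2 - 2 * a * g y + a ^ 2 := fun y => by ring
      simp_rw [e1]
      rw [integral_add hisub hic, integral_sub hint_g2 hia, integral_const_mul,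
        setIntegral_const, measureReal_def, hvolr, smul_eq_mul, ← hT]
    rw [key, hTa]; ring
  -- final
  have hsqb : ∫ y in s, (g y - a) ^ 2 ≤ 2 * h * c ^ 2 := by
    calc ∫ y in s, (g y - a) ^ 2 ≤ ∫ _ in s, c ^ 2 := by
          refine setIntegral_mono_on hint_gma2
            (integrableOn_const hfin) hms (fun y hy => ?_)
          calc (g y - a) ^ 2 = |g y - a| ^ 2 := (sq_abs _).symm
            _ ≤ c ^ 2 := pow_le_pow_left₀ (abs_nonneg _) (hpt y hy) 2
      _ = 2 * h * c ^ 2 := by rw [setIntegral_const, measureReal_def, hvolr, smul_eq_mul]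
  have haT : 2 * h * a ^ 2 = T ^ 2 / (2 * h) := by
    rw [ha]; field_simp
  rw [horth, haT]
  gcongr

lemma holder_nonneg {f : ℝ → ℝ} {L β : ℝ}
    (hf : ∀ a b : ℝ, |f a - f b| ≤ L * |a - b| ^ β) : 0 ≤ L := by
  have := hf 0 1
  simp at this
  exact le_trans (abs_nonneg _) this


theorem l1_discretization_bound (N : ℕ) (f f0 : ℝ → ℝ) (L L0 β : ℝ)
    (hβ0 : 0 < β) (hβ1 : β ≤ 1)
    (hf : ∀ a b : ℝ, |f a - f b| ≤ L * |a - b| ^ β)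
    (hf0 : ∀ a b : ℝ, |f0 a - f0 b| ≤ L0 * |a - b| ^ β)
    (h : ℝ) (hh : 0 < h) (x : Fin N → ℝ)
    (hdisj : ∀ i j, i ≠ j →
      Disjoint (Set.Icc (x i - h) (x i + h)) (Set.Icc (x j - h) (x j + h))) :
    (∫ y in ⋃ j, Set.Icc (x j - h) (x j + h), |f y - f0 y|) ^ 2
      ≤ 4 * (L + L0) ^ 2 * (2 * N * h) ^ 2 * h ^ (2 * β) +
        ((2 * N * h) / (2 * h)) * ∑ j : Fin N,
          ((∫ y in Set.Icc (x j - h) (x j + h), f y) -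
           (∫ y in Set.Icc (x j - h) (x j + h), f0 y)) ^ 2 := by
  have hL : 0 ≤ L := holder_nonneg hf
  have hL0 : 0 ≤ L0 := holder_nonneg hf0
  have hcf : Continuous f := holder_cont hβ0 hf
  have hcf0 : Continuous f0 := holder_cont hβ0 hf0
  set g : ℝ → ℝ := fun y => f y - f0 y with hg
  have hgc : Continuous g := hcf.sub hcf0
  have hgH : ∀ a b : ℝ, |g a - g b| ≤ (L + L0) * |a - b| ^ β := by
    intro a b
    have : g a - g b = (f a - f b) - (f0 a - f0 b) := by rw [hg]; ring
    rw [this, add_mul]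
    exact (abs_sub _ _).trans (add_le_add (hf a b) (hf0 a b))
  set Bj : Fin N → Set ℝ := fun j => Set.Icc (x j - h) (x j + h) with hBj
  have hms : ∀ j, MeasurableSet (Bj j) := fun j => measurableSet_Icc
  have hpd : Pairwise (Function.onFun Disjoint Bj) := fun i j hij => hdisj i j hij
  set B := ⋃ j, Bj j with hB
  have hmsB : MeasurableSet B := MeasurableSet.iUnion hms
  have hvolj : ∀ j, volume (Bj j) = ENNReal.ofReal (2 * h) := by
    intro j; rw [hBj]; rw [Real.volume_Icc]; ring_nf
  have hvolB : (volume B).toReal = 2 * N * h := by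
    rw [hB, measure_iUnion hpd hms]
    rw [tsum_fintype]
    simp only [hvolj, Finset.sum_const, Finset.card_univ, Fintype.card_fin, nsmul_eq_mul]
    rw [ENNReal.toReal_mul, ENNReal.toReal_natCast, ENNReal.toReal_ofReal (by positivity)]
    ring
  have hfinB : volume B ≠ ⊤ := by
    rw [hB, measure_iUnion hpd hms, tsum_fintype]
    simp only [hvolj, Finset.sum_const, Finset.card_univ, Fintype.card_fin, nsmul_eq_mul]
    exact ENNReal.mul_ne_top (ENNReal.natCast_ne_top N) ENNReal.ofReal_ne_top
  have hintabs : IntegrableOn (fun y => |g y|) B := by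
    rw [hB, integrableOn_finite_iUnion]
    exact fun j => (hgc.abs).integrableOn_Icc
  have hint2 : IntegrableOn (fun y => g y ^ 2) B := by
    rw [hB, integrableOn_finite_iUnion]
    exact fun j => (hgc.pow 2).integrableOn_Icc
  have hcs := cs_int hmsB hfinB hintabs (by
      have : (fun y => |g y| ^ 2) = fun y => g y ^ 2 := by funext y; rw [sq_abs]
      rw [this]; exact hint2) (fun y => abs_nonneg _)
  simp_rw [sq_abs] at hcs
  -- split integral over union
  have hsplit : ∫ y in B, g y ^ 2 = ∑ j : Fin N, ∫ y in Bj j, g y ^ 2 := by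
    rw [hB, integral_iUnion hms hpd hint2.integrable, tsum_fintype]
  -- per-interval bound
  have hdj : ∀ j, ∫ y in Bj j, g y
      = (∫ y in Bj j, f y) - ∫ y in Bj j, f0 y := by
    intro j
    exact integral_sub hcf.integrableOn_Icc hcf0.integrableOn_Icc
  have hjb : ∀ j : Fin N, ∫ y in Bj j, g y ^ 2
      ≤ 2 * h * (2 * (L + L0) * h ^ β) ^ 2
        + ((∫ y in Bj j, f y) - ∫ y in Bj j, f0 y) ^ 2 / (2 * h) := by
    intro j
    have := interval_bound hgc (by positivity : (0:ℝ) ≤ L + L0) hβ0 hβ1 hh hgH (x j)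
    rw [← hdj j]
    exact this
  have hpow : h ^ (2 * β) = (h ^ β) ^ 2 := by
    rw [mul_comm, Real.rpow_mul hh.le]
    norm_num
  calc (∫ y in B, |g y|) ^ 2 ≤ (volume B).toReal * ∫ y in B, g y ^ 2 := hcs
    _ = (2 * N * h) * ∑ j : Fin N, ∫ y in Bj j, g y ^ 2 := by rw [hvolB, hsplit]
    _ ≤ (2 * N * h) * ∑ j : Fin N, (2 * h * (2 * (L + L0) * h ^ β) ^ 2
        + ((∫ y in Bj j, f y) - ∫ y in Bj j, f0 y) ^ 2 / (2 * h)) := by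
        refine mul_le_mul_of_nonneg_left (Finset.sum_le_sum fun j _ => hjb j) (by positivity)
    _ = 4 * (L + L0) ^ 2 * (2 * N * h) ^ 2 * h ^ (2 * β) +
        ((2 * N * h) / (2 * h)) * ∑ j : Fin N,
          ((∫ y in Bj j, f y) - ∫ y in Bj j, f0 y) ^ 2 := by
        rw [Finset.sum_add_distrib, Finset.sum_const, Finset.card_univ, Fintype.card_fin,
          nsmul_eq_mul, ← Finset.sum_div, hpow]
        field_simp
        ring
end

section
/- Let a_1, …, a_N ≥ 0 and τ > 0. Then Σ_j a_j · min(a_j, τ) ≥ min( Σ_j a_j², τ · sqrt(Σ_j a_j²) ). -/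
theorem truncated_sum_lower_bound (N : ℕ) (a : Fin N → ℝ) (ha : ∀ j, 0 ≤ a j)
    (τ : ℝ) (hτ : 0 < τ) :
    min (∑ j, (a j) ^ 2) (τ * Real.sqrt (∑ j, (a j) ^ 2))
      ≤ ∑ j, a j * min (a j) τ := by
  set S : ℝ := ∑ j, (a j) ^ 2 with hS
  have hS0 : 0 ≤ S := Finset.sum_nonneg fun j _ => sq_nonneg _
  have haj : ∀ j, a j ≤ Real.sqrt S := by
    intro j
    rw [show a j = Real.sqrt ((a j) ^ 2) by rw [Real.sqrt_sq (ha j)]]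
    exact Real.sqrt_le_sqrt (Finset.single_le_sum (fun i _ => sq_nonneg (a i))
      (Finset.mem_univ j))
  rcases le_or_gt (Real.sqrt S) τ with h | h
  · -- all a j ≤ τ
    have : ∑ j, a j * min (a j) τ = S := by
      rw [hS]
      apply Finset.sum_congr rfl
      intro j _
      rw [min_eq_left ((haj j).trans h), sq]
    rw [this]
    exact min_le_left _ _
  · -- τ < sqrt S, termwise bound
    refine le_trans (min_le_right _ _) ?_
    have hsqS : 0 < Real.sqrt S := hτ.trans h
    have key : ∀ j, (τ / Real.sqrt S) * (a j) ^ 2 ≤ a j * min (a j) τ := by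
      intro j
      rcases le_or_gt (a j) τ with hj | hj
      · rw [min_eq_left hj]
        have : τ / Real.sqrt S ≤ 1 := (div_le_one hsqS).2 h.le
        calc (τ / Real.sqrt S) * (a j) ^ 2 ≤ 1 * (a j) ^ 2 :=
              mul_le_mul_of_nonneg_right this (sq_nonneg _)
          _ = a j * a j := by ring
      · rw [min_eq_right hj.le]
        rw [div_mul_eq_mul_div, div_le_iff₀ hsqS]
        calc τ * (a j) ^ 2 = (τ * a j) * a j := by ring
          _ ≤ (τ * a j) * Real.sqrt S := by
              apply mul_le_mul_of_nonneg_left (haj j)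
              exact mul_nonneg hτ.le (ha j)
          _ = a j * τ * Real.sqrt S := by ring
    calc τ * Real.sqrt S = (τ / Real.sqrt S) * S := by
          field_simp; rw [Real.sq_sqrt hS0]
      _ = ∑ j, (τ / Real.sqrt S) * (a j) ^ 2 := by
          rw [hS, Finset.mul_sum]
      _ ≤ ∑ j, a j * min (a j) τ := Finset.sum_le_sum fun j _ => key j
end

section
/- Let f_0 : [0,∞) → [0,∞) be of the form f_0(x) = ℓ(x)/(1+x) with ℓ nonnegative, and suppose there exist c ∈ (0,1) and t > 1 such that ℓ(t x) ≤ c ℓ(x) for all x ≥ 1. Then for all a ≥ 1, ∫_{ta}^∞ f_0 ≤ c (1 + (t−1)/(1+ta)) ∫_a^∞ f_0 (assuming these integrals are finite). -/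
open MeasureTheory

theorem tail_integral_bound (ℓ : ℝ → ℝ) (hm : Measurable ℓ) (hnn : ∀ x, 0 ≤ ℓ x)
    (c t : ℝ) (hc0 : 0 < c) (hc1 : c < 1) (ht : 1 < t)
    (hdec : ∀ x, 1 ≤ x → ℓ (t * x) ≤ c * ℓ x)
    (a : ℝ) (ha : 1 ≤ a)
    (hint : IntegrableOn (fun x => ℓ x / (1 + x)) (Set.Ici a)) :
    (∫ x in Set.Ici (t * a), ℓ x / (1 + x))
      ≤ c * (1 + (t - 1) / (1 + t * a)) * ∫ x in Set.Ici a, ℓ x / (1 + x) := by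
  set f : ℝ → ℝ := fun x => ℓ x / (1 + x) with hf
  have ht0 : 0 < t := lt_trans one_pos ht
  have hta : a ≤ t * a := by nlinarith
  have h1ta : 0 < 1 + t * a := by nlinarith
  set K : ℝ := 1 + (t - 1) / (1 + t * a) with hK
  have hK1 : 1 ≤ K := by
    have : 0 ≤ (t - 1) / (1 + t * a) := div_nonneg (by linarith) h1ta.le
    simp [hK]; linarith
  -- integrability of f on Ici (t*a) and Ioi a
  have hint' : IntegrableOn f (Set.Ioi a) := hint.mono_set Set.Ioi_subset_Ici_self
  have hintta : IntegrableOn f (Set.Ioi (t * a)) :=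
    hint.mono_set (le_trans Set.Ioi_subset_Ici_self (Set.Ici_subset_Ici.mpr hta))
  have hcomp : IntegrableOn (fun x => f (t * x)) (Set.Ioi a) :=
    (integrableOn_Ioi_comp_mul_left_iff f a ht0).mpr hintta
  -- change of variables
  have hsub : (∫ x in Set.Ioi (t * a), f x) = t * ∫ x in Set.Ioi a, f (t * x) := by
    rw [integral_comp_mul_left_Ioi f a ht0, smul_eq_mul, ← mul_assoc,
      mul_inv_cancel₀ ht0.ne', one_mul]
  -- pointwise bound
  have hpt : ∀ x ∈ Set.Ioi a, t * f (t * x) ≤ c * K * f x := by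
    intro x hx
    have hx1 : 1 ≤ x := le_trans ha (le_of_lt hx)
    have hxa : a ≤ x := le_of_lt hx
    have h1x : (0:ℝ) < 1 + x := by linarith
    have h1tx : (0:ℝ) < 1 + t * x := by nlinarith
    have hl : ℓ (t * x) ≤ c * ℓ x := hdec x hx1
    have key : t * (1 + x) * (1 + t * a) ≤ t * (1 + a) * (1 + t * x) := by
      nlinarith [mul_nonneg (mul_nonneg ht0.le (by linarith : (0:ℝ) ≤ t - 1)) (by linarith : (0:ℝ) ≤ x - a)]
    have hKval : K = t * (1 + a) / (1 + t * a) := by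
      rw [hK, eq_div_iff h1ta.ne', add_mul, div_mul_cancel₀ _ h1ta.ne']; ring
    -- t * ℓ(t x)/(1+tx) ≤ t * c ℓ x /(1+tx) ≤ c K ℓ x /(1+x)
    have step1 : t * f (t * x) ≤ c * (ℓ x * (t / (1 + t * x))) := by
      simp only [hf]
      rw [div_eq_mul_inv, div_eq_mul_inv]
      have := mul_le_mul_of_nonneg_right hl (inv_nonneg.mpr h1tx.le)
      calc t * (ℓ (t * x) * (1 + t * x)⁻¹) ≤ t * (c * ℓ x * (1 + t * x)⁻¹) := by
            apply mul_le_mul_of_nonneg_left this ht0.le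
        _ = c * (ℓ x * (t * (1 + t * x)⁻¹)) := by ring
    have step2 : t / (1 + t * x) ≤ K / (1 + x) := by
      rw [hKval, div_le_div_iff₀ h1tx h1x, div_mul_eq_mul_div, le_div_iff₀ h1ta]
      nlinarith
    calc t * f (t * x) ≤ c * (ℓ x * (t / (1 + t * x))) := step1
      _ ≤ c * (ℓ x * (K / (1 + x))) := by
          apply mul_le_mul_of_nonneg_left _ hc0.le
          exact mul_le_mul_of_nonneg_left step2 (hnn x)
      _ = c * K * f x := by simp only [hf]; ring
  have hmono : (∫ x in Set.Ioi a, t * f (t * x)) ≤ ∫ x in Set.Ioi a, c * K * f x := by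
    apply setIntegral_mono_on (hcomp.const_mul t) (hint'.const_mul (c * K))
      measurableSet_Ioi hpt
  calc (∫ x in Set.Ici (t * a), f x) = ∫ x in Set.Ioi (t * a), f x :=
        integral_Ici_eq_integral_Ioi
    _ = t * ∫ x in Set.Ioi a, f (t * x) := hsub
    _ = ∫ x in Set.Ioi a, t * f (t * x) := (integral_const_mul t _).symm
    _ ≤ ∫ x in Set.Ioi a, c * K * f x := hmono
    _ = c * K * ∫ x in Set.Ioi a, f x := integral_const_mul _ _
    _ = c * K * ∫ x in Set.Ici a, f x := by rw [integral_Ici_eq_integral_Ioi]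
end

section
/- Let f_0 ∈ H(β, L_0) and ψ ∈ H(β, L) with support in [−1,1], where 0 < β ≤ 1 and 0 < L_0 < L. Let (B_j)_{j=1..N} be disjoint intervals B_j = [x_j − h, x_j + h], ψ_j(t) = h^{−1/2} ψ((t − x_j)/h), and δ ≤ (h^{β+1/2}/2)(1 − L_0/L). Then for every ν ∈ {−1,1}^N, the function f_ν = f_0 + δ Σ_j ν_j ψ_j belongs to H(β, L), i.e. |f_ν(x) − f_ν(y)| ≤ L|x − y|^β for all x, y ∈ ℝ. -/
theorem perturbed_density_holder (N : ℕ) (f0 ψ : ℝ → ℝ) (L L0 β : ℝ)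
    (hβ0 : 0 < β) (hβ1 : β ≤ 1) (hL0 : 0 < L0) (hLL : L0 < L)
    (hf0 : ∀ a b : ℝ, |f0 a - f0 b| ≤ L0 * |a - b| ^ β)
    (hψ : ∀ a b : ℝ, |ψ a - ψ b| ≤ L * |a - b| ^ β)
    (hsupp : ∀ t, t ∉ Set.Icc (-1 : ℝ) 1 → ψ t = 0)
    (h : ℝ) (hh : 0 < h) (x : Fin N → ℝ)
    (hdisj : ∀ i j, i ≠ j →
      Disjoint (Set.Icc (x i - h) (x i + h)) (Set.Icc (x j - h) (x j + h)))
    (δ : ℝ) (hδ0 : 0 ≤ δ) (hδ : δ ≤ h ^ (β + 1 / 2 : ℝ) / 2 * (1 - L0 / L))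
    (ν : Fin N → ℝ) (hν : ∀ j, ν j = 1 ∨ ν j = -1) :
    ∀ a b : ℝ,
      |(f0 a + δ * ∑ j, ν j * ((Real.sqrt h)⁻¹ * ψ ((a - x j) / h))) -
        (f0 b + δ * ∑ j, ν j * ((Real.sqrt h)⁻¹ * ψ ((b - x j) / h)))|
      ≤ L * |a - b| ^ β := by
  classical
  intro a b
  have hL : 0 < L := hL0.trans hLL
  set A : ℝ := |a - b| ^ β with hAdef
  have hA0 : 0 ≤ A := Real.rpow_nonneg (abs_nonneg _) β
  have hS0 : 0 < Real.sqrt h := Real.sqrt_pos.2 hh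
  have hHβ : 0 < h ^ β := Real.rpow_pos_of_pos hh β
  set D : Fin N → ℝ := fun j =>
    ν j * ((Real.sqrt h)⁻¹ * ψ ((a - x j) / h)) -
      ν j * ((Real.sqrt h)⁻¹ * ψ ((b - x j) / h)) with hDdef
  set C : ℝ := (Real.sqrt h)⁻¹ * (L * (A / h ^ β)) with hCdef
  have hC0 : 0 ≤ C := by positivity
  -- per-term bound
  have hbound : ∀ j, |D j| ≤ C := by
    intro j
    have hν1 : |ν j| = 1 := by rcases hν j with h1 | h1 <;> simp [h1]
    have hrw : D j = ν j * ((Real.sqrt h)⁻¹ *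
        (ψ ((a - x j) / h) - ψ ((b - x j) / h))) := by rw [hDdef]; ring
    rw [hrw, abs_mul, hν1, one_mul, abs_mul, abs_inv, abs_of_pos hS0, hCdef]
    have key : |ψ ((a - x j) / h) - ψ ((b - x j) / h)| ≤ L * (A / h ^ β) := by
      have h1 := hψ ((a - x j) / h) ((b - x j) / h)
      have h2 : (a - x j) / h - (b - x j) / h = (a - b) / h := by ring
      have h3 : |(a - b) / h| = |a - b| / h := by
        rw [abs_div, abs_of_pos hh]
      have h4 : (|a - b| / h) ^ β = |a - b| ^ β / h ^ β :=
        Real.div_rpow (abs_nonneg _) hh.le β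
      rw [h2, h3, h4] at h1
      exact h1
    gcongr
  -- zero off support
  have hzero : ∀ j, a ∉ Set.Icc (x j - h) (x j + h) →
      b ∉ Set.Icc (x j - h) (x j + h) → D j = 0 := by
    intro j ha hb
    have key : ∀ t : ℝ, t ∉ Set.Icc (x j - h) (x j + h) → ψ ((t - x j) / h) = 0 := by
      intro t ht
      apply hsupp
      intro hmem
      apply ht
      obtain ⟨h1, h2⟩ := hmem
      have h1' : -h ≤ t - x j := by
        have := (le_div_iff₀ hh).mp h1; linarith
      have h2' : t - x j ≤ h := by
        have := (div_le_one hh).mp h2; linarith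
      constructor <;> linarith
    rw [hDdef]
    simp [key a ha, key b hb]
  -- restrict sum to relevant filter
  set P : Fin N → Prop := fun j =>
    a ∈ Set.Icc (x j - h) (x j + h) ∨ b ∈ Set.Icc (x j - h) (x j + h) with hPdef
  have hsum : ∑ j, D j = ∑ j ∈ Finset.univ.filter P, D j := by
    refine (Finset.sum_filter_of_ne ?_).symm
    intro j _ hne
    by_contra hP
    push_neg at hP
    exact hne (hzero j hP.1 hP.2)
  have hcard1 : ∀ t : ℝ,
      (Finset.univ.filter (fun j : Fin N => t ∈ Set.Icc (x j - h) (x j + h))).card ≤ 1 := by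
    intro t
    apply Finset.card_le_one.2
    intro i hi j hj
    simp only [Finset.mem_filter] at hi hj
    by_contra hne
    exact Set.disjoint_left.mp (hdisj i j hne) hi.2 hj.2
  have hcard : (Finset.univ.filter P).card ≤ 2 := by
    have hsub : Finset.univ.filter P ⊆
        Finset.univ.filter (fun j : Fin N => a ∈ Set.Icc (x j - h) (x j + h)) ∪
        Finset.univ.filter (fun j : Fin N => b ∈ Set.Icc (x j - h) (x j + h)) := by
      intro j hj
      simp only [Finset.mem_filter, Finset.mem_union] at hj ⊢
      rcases hj.2 with hc | hc
      · exact Or.inl ⟨hj.1, hc⟩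
      · exact Or.inr ⟨hj.1, hc⟩
    calc (Finset.univ.filter P).card ≤ _ := Finset.card_le_card hsub
      _ ≤ _ + _ := Finset.card_union_le _ _
      _ ≤ 1 + 1 := add_le_add (hcard1 a) (hcard1 b)
  -- bound the sum
  have hsumbound : |∑ j, D j| ≤ 2 * C := by
    rw [hsum]
    calc |∑ j ∈ Finset.univ.filter P, D j|
        ≤ ∑ j ∈ Finset.univ.filter P, |D j| := Finset.abs_sum_le_sum_abs _ _
      _ ≤ (Finset.univ.filter P).card • C :=
          Finset.sum_le_card_nsmul _ _ C (fun j _ => hbound j)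
      _ = ((Finset.univ.filter P).card : ℝ) * C := by rw [nsmul_eq_mul]
      _ ≤ 2 * C := by
          have : ((Finset.univ.filter P).card : ℝ) ≤ 2 := by exact_mod_cast hcard
          exact mul_le_mul_of_nonneg_right this hC0
  -- key arithmetic: δ * (2 * C) ≤ (L - L0) * A
  have hrpow : h ^ (β + 1 / 2 : ℝ) = h ^ β * Real.sqrt h := by
    rw [Real.rpow_add hh, Real.sqrt_eq_rpow]
  have hδC : δ * (2 * C) ≤ (L - L0) * A := by
    rw [hCdef]
    have hδ' : δ ≤ h ^ β * Real.sqrt h / 2 * (1 - L0 / L) := by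
      rw [← hrpow]; exact hδ
    have h1 : δ * (2 * ((Real.sqrt h)⁻¹ * (L * (A / h ^ β))))
        = δ * (2 * L * A) / (Real.sqrt h * h ^ β) := by
      rw [div_eq_mul_inv, div_eq_mul_inv, mul_inv]
      ring
    rw [h1, div_le_iff₀ (by positivity : (0:ℝ) < Real.sqrt h * h ^ β)]
    have h2 : δ * (2 * L * A) ≤ h ^ β * Real.sqrt h / 2 * (1 - L0 / L) * (2 * L * A) :=
      mul_le_mul_of_nonneg_right hδ' (by positivity)
    have hfrac : (1 - L0 / L) * L = L - L0 := by field_simp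
    nlinarith [h2, hfrac, hA0, hS0.le, hHβ.le,
      mul_nonneg (mul_nonneg hHβ.le hS0.le) hA0]
  -- assemble
  have hrewrite : (f0 a + δ * ∑ j, ν j * ((Real.sqrt h)⁻¹ * ψ ((a - x j) / h))) -
      (f0 b + δ * ∑ j, ν j * ((Real.sqrt h)⁻¹ * ψ ((b - x j) / h)))
      = (f0 a - f0 b) + δ * ∑ j, D j := by
    rw [hDdef, Finset.sum_sub_distrib]
    ring
  rw [hrewrite]
  calc |(f0 a - f0 b) + δ * ∑ j, D j|
      ≤ |f0 a - f0 b| + |δ * ∑ j, D j| := abs_add_le _ _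
    _ ≤ L0 * A + δ * (2 * C) := by
        refine add_le_add (hf0 a b) ?_
        rw [abs_mul, abs_of_nonneg hδ0]
        exact mul_le_mul_of_nonneg_left hsumbound hδ0
    _ ≤ L0 * A + (L - L0) * A := by linarith [hδC]
    _ = L * A := by ring
end
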